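/- Let R be an LM-system. If f(s1,…,sm) reduces modulo R to its normal form g(t1,…,tn) with f ≠ g, then (f, g) is the root pair of some rule in R. -/

import Mathlib

/-! Basic first-order terms, positions, substitutions and rewriting. -/

inductive Term (F : Type) : Type
  | var : Nat → Term F
  | app : F → List (Term F) → Term F

namespace Term

def subst {F : Type} (σ : Nat → Term F) : Term F → Term F
  | var n => σ n
  | app f ts => app f (ts.attach.map fun ⟨t, _⟩ => t.subst σ)

def root {F : Type} : Term F → Option F
  | var _ => none
  | app f _ => some f

def label {F : Type} : Term F → F ⊕ Nat
  | var n => Sum.inr n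
  | app f _ => Sum.inl f

def IsVar {F : Type} : Term F → Prop
  | var _ => True
  | app _ _ => False

def varsL {F : Type} : Term F → List Nat
  | var n => [n]
  | app _ ts => (ts.attach.map fun ⟨t, _⟩ => t.varsL).flatten

end Term

abbrev Rule (F : Type) := Term F × Term F
abbrev TRS (F : Type) := Set (Rule F)

/-- `SubtermAt t p u` : the subterm of `t` at position `p` is `u`. -/
inductive SubtermAt {F : Type} : Term F → List Nat → Term F → Prop
  | here (t : Term F) : SubtermAt t [] t
  | there {f : F} {ts : List (Term F)} {i : Nat} {u : Term F} {p : List Nat} {v : Term F} :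
      ts[i]? = some u → SubtermAt u p v → SubtermAt (Term.app f ts) (i :: p) v

/-- `ReplaceAt t p v t'` : replacing the subterm of `t` at position `p` by `v` yields `t'`. -/
inductive ReplaceAt {F : Type} : Term F → List Nat → Term F → Term F → Prop
  | here (t u : Term F) : ReplaceAt t [] u u
  | there {f : F} {ts : List (Term F)} {i : Nat} {u : Term F} {p : List Nat} {v w : Term F} :
      ts[i]? = some u → ReplaceAt u p v w →
      ReplaceAt (Term.app f ts) (i :: p) v (Term.app f (ts.set i w))

variable {F : Type}

/-- One rewrite step using the given rule (at some position, with some substitution). -/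
def RuleStep (ρ : Rule F) (s t : Term F) : Prop :=
  ∃ (σ : Nat → Term F) (p : List Nat),
    SubtermAt s p (ρ.1.subst σ) ∧ ReplaceAt s p (ρ.2.subst σ) t

def OneStep (R : TRS F) (s t : Term F) : Prop := ∃ ρ ∈ R, RuleStep ρ s t

/-- A rewrite step at the root position. -/
def RootStep (R : TRS F) (s t : Term F) : Prop :=
  ∃ ρ ∈ R, ∃ σ : Nat → Term F, s = ρ.1.subst σ ∧ t = ρ.2.subst σ

def StarRW (R : TRS F) : Term F → Term F → Prop := Relation.ReflTransGen (OneStep R)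
def Plus (R : TRS F) : Term F → Term F → Prop := Relation.TransGen (OneStep R)
/-- Convertibility (the congruence / equational theory generated by `R`). -/
def Conv (R : TRS F) : Term F → Term F → Prop := Relation.EqvGen (OneStep R)
def Joinable (R : TRS F) (s t : Term F) : Prop := ∃ u, StarRW R s u ∧ StarRW R t u
def NormalForm (R : TRS F) (t : Term F) : Prop := ∀ u, ¬ OneStep R t u
/-- `t` is the `R`-normal form of `s`. -/
def NFof (R : TRS F) (s t : Term F) : Prop := StarRW R s t ∧ NormalForm R t
def Terminating (R : TRS F) : Prop := WellFounded (fun a b : Term F => OneStep R b a)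
def Confluent (R : TRS F) : Prop := ∀ s t u, StarRW R s t → StarRW R s u → Joinable R t u
def Convergent (R : TRS F) : Prop := Confluent R ∧ Terminating R

/-- every proper subterm is irreducible -/
def EpsIrreducible (R : TRS F) (t : Term F) : Prop :=
  ∀ p u, SubtermAt t p u → p ≠ [] → NormalForm R u

def InnermostRedex (R : TRS F) (t : Term F) : Prop :=
  EpsIrreducible R t ∧ ¬ NormalForm R t

/-- Forward-closed, via the one-step-to-normal-form characterization. -/
def FCclosed (R : TRS F) : Prop :=
  ∀ t, InnermostRedex R t → ∀ u, NFof R t u → OneStep R t u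

def Unifies (σ : Nat → Term F) (s t : Term F) : Prop := s.subst σ = t.subst σ

def IsMGU (σ : Nat → Term F) (s t : Term F) : Prop :=
  Unifies σ s t ∧ ∀ τ, Unifies τ s t → ∃ δ, ∀ x, τ x = (σ x).subst δ

def IsRenaming (ρ : Nat → Term F) : Prop :=
  ∃ f : Nat → Nat, Function.Injective f ∧ ∀ n, ρ n = Term.var (f n)

/-- Redundancy criterion for an oriented equation `e` whose right-hand side is
reachable from its left-hand side: some proper subterm of the lhs is reducible. -/
def Redundant (R : TRS F) (e : Rule F) : Prop :=
  ∃ p u, p ≠ ([] : List Nat) ∧ SubtermAt e.1 p u ∧ ¬ NormalForm R u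

/-- `R₁ ↝ R₂`: forward overlaps of rules of `R₂` (renamed apart) into
right-hand sides of rules of `R₁`, at non-variable positions, via an mgu. -/
def FStep (R₁ R₂ : TRS F) : TRS F :=
  { e | ∃ (l₁ r₁ l₂ r₂ : Term F) (ρ : Nat → Term F) (p : List Nat) (u : Term F)
          (σ : Nat → Term F) (r₁' : Term F),
      (l₁, r₁) ∈ R₁ ∧ (l₂, r₂) ∈ R₂ ∧ IsRenaming ρ ∧
      SubtermAt r₁ p u ∧ ¬ u.IsVar ∧ IsMGU σ u (l₂.subst ρ) ∧
      ReplaceAt r₁ p (r₂.subst ρ) r₁' ∧ e = (l₁.subst σ, r₁'.subst σ) }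

def FCiter (R : TRS F) : Nat → TRS F
  | 0 => R
  | k + 1 => FCiter R k ∪ { e | e ∈ FStep (FCiter R k) R ∧ ¬ Redundant (FCiter R k) e }

def FCinf (R : TRS F) : TRS F := ⋃ k, FCiter R k

/-- Forward-closed, via the forward-closure construction: `FC(R) = R`. -/
def ForwardClosedFC (R : TRS F) : Prop := FCinf R = R

/-- `RHS(R)`: `R` together with the conclusions of right-hand-side critical
pair inferences (second rule renamed apart). -/
def RHSset (R : TRS F) : TRS F :=
  R ∪ { e | ∃ (s t u₀ v₀ : Term F) (ρ σ : Nat → Term F), (s, t) ∈ R ∧ (u₀, v₀) ∈ R ∧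
        IsRenaming ρ ∧ IsMGU σ t (v₀.subst ρ) ∧
        s.subst σ ≠ (u₀.subst ρ).subst σ ∧ e = (s.subst σ, (u₀.subst ρ).subst σ) }

/-- the (unordered) pairs of root symbols of two equations coincide -/
def RootPairSimilar (e₁ e₂ : Rule F) : Prop :=
  (e₁.1.root = e₂.1.root ∧ e₁.2.root = e₂.2.root) ∨
  (e₁.1.root = e₂.2.root ∧ e₁.2.root = e₂.1.root)

def QuasiDet (E : TRS F) : Prop :=
  (∀ e ∈ E, ¬ e.1.IsVar ∧ ¬ e.2.IsVar) ∧
  (∀ e ∈ E, e.1.root ≠ e.2.root) ∧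
  (∀ e₁ ∈ E, ∀ e₂ ∈ E, e₁ ≠ e₂ → ¬ RootPairSimilar e₁ e₂)

def HasRootPairRepetition (E : TRS F) : Prop :=
  ∃ e₁ ∈ E, ∃ e₂ ∈ E, e₁ ≠ e₂ ∧ RootPairSimilar e₁ e₂

def VarPreserving (R : TRS F) : Prop :=
  ∀ e ∈ R, ∀ n, n ∈ Term.varsL e.1 ↔ n ∈ Term.varsL e.2

def RightReduced (R : TRS F) : Prop := ∀ e ∈ R, NormalForm R e.2

def AlmostLeftReduced (R : TRS F) : Prop :=
  ¬ ∃ (l₁ r₁ l₂ r₂ : Term F) (p : List Nat) (u : Term F) (σ : Nat → Term F),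
      (l₁, r₁) ∈ R ∧ (l₂, r₂) ∈ R ∧ p ≠ [] ∧ SubtermAt l₁ p u ∧ u = l₂.subst σ

def NonSubtermCollapsing (R : TRS F) : Prop :=
  ¬ ∃ (t u : Term F) (p : List Nat), p ≠ [] ∧ SubtermAt u p t ∧ Conv R t u

structure LMSystem (R : TRS F) : Prop where
  convergent : Convergent R
  almostLeftReduced : AlmostLeftReduced R
  rightReduced : RightReduced R
  nonCollapsing : NonSubtermCollapsing R
  forwardClosed : FCclosed R
  quasiDet : QuasiDet (RHSset R)

/-- the symbol (function symbol or variable) of a term at a position, if defined -/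
def labelAt {F : Type} : List Nat → Term F → Option (F ⊕ Nat)
  | [], t => some t.label
  | i :: p, Term.app _ ts => (ts[i]?).bind (labelAt p)
  | _ :: _, Term.var _ => none

/-- outermost distinguishing position -/
def ODP (s t : Term F) (p : List Nat) : Prop :=
  (labelAt p s ≠ none ∨ labelAt p t ≠ none) ∧
  labelAt p s ≠ labelAt p t ∧
  ∀ q, q <+: p → q ≠ p → labelAt q s = labelAt q t



section Aux

variable {F : Type} {R : TRS F}

lemma set_get?_self {α : Type _} {ts : List α} {i : Nat} {u : α}
    (hi : ts[i]? = some u) : ts.set i u = ts := by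
  apply List.ext_getElem?
  intro n
  rcases eq_or_ne i n with rfl | hne
  · rw [List.getElem?_set_self (List.getElem?_eq_some_iff.mp hi).1, hi]
  · rw [List.getElem?_set_ne hne]

lemma subtermAt_nil {t u : Term F} (h : SubtermAt t [] u) : u = t := by
  cases h; rfl

lemma replaceAt_nil {t v t' : Term F} (h : ReplaceAt t [] v t') : t' = v := by
  cases h; rfl

lemma ruleStep_lift {ρ : Rule F} {u u' : Term F} (h : RuleStep ρ u u')
    {f : F} {ts : List (Term F)} {i : Nat} (hi : ts[i]? = some u) :
    RuleStep ρ (Term.app f ts) (Term.app f (ts.set i u')) := by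
  obtain ⟨σ, p, h1, h2⟩ := h
  exact ⟨σ, i :: p, SubtermAt.there hi h1, ReplaceAt.there hi h2⟩

lemma oneStep_lift {u u' : Term F} (h : OneStep R u u')
    {f : F} {ts : List (Term F)} {i : Nat} (hi : ts[i]? = some u) :
    OneStep R (Term.app f ts) (Term.app f (ts.set i u')) := by
  obtain ⟨ρ, hρ, hs⟩ := h
  exact ⟨ρ, hρ, ruleStep_lift hs hi⟩

lemma star_lift {u u' : Term F} (h : StarRW R u u')
    {f : F} {ts : List (Term F)} {i : Nat} (hi : ts[i]? = some u) :
    StarRW R (Term.app f ts) (Term.app f (ts.set i u')) := by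
  induction h using Relation.ReflTransGen.head_induction_on generalizing ts with
  | refl => rw [set_get?_self hi]; exact Relation.ReflTransGen.refl
  | @head a b hstep _ ih =>
      have hlt : i < ts.length := (List.getElem?_eq_some_iff.mp hi).1
      have hib : (ts.set i b)[i]? = some b := List.getElem?_set_self hlt
      have := ih hib
      rw [List.set_set] at this
      exact Relation.ReflTransGen.head (oneStep_lift hstep hi) this

/-- a subterm of a normal form is a normal form -/
lemma normal_subterm {t : Term F} {p : List Nat} {u : Term F}
    (h : SubtermAt t p u) (hn : NormalForm R t) : NormalForm R u := by
  induction h with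
  | here t => exact hn
  | @there f ts i u0 p v hget _ ih =>
      apply ih
      intro w hw
      obtain ⟨ρ, hρ, hs⟩ := hw
      exact hn _ ⟨ρ, hρ, ruleStep_lift hs hget⟩

lemma exists_nf (hT : Terminating R) (s : Term F) : ∃ t, NFof R s t := by
  induction s using WellFounded.induction hT with
  | _ s ih =>
      by_cases hs : NormalForm R s
      · exact ⟨s, Relation.ReflTransGen.refl, hs⟩
      · rw [NormalForm] at hs
        push_neg at hs
        obtain ⟨u, hu⟩ := hs
        obtain ⟨t, ht1, ht2⟩ := ih u hu
        exact ⟨t, Relation.ReflTransGen.head hu ht1, ht2⟩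

lemma star_of_normal {t u : Term F} (hn : NormalForm R t) (h : StarRW R t u) :
    u = t := by
  rcases Relation.ReflTransGen.cases_head h with rfl | ⟨c, hc, _⟩
  · rfl
  · exact absurd hc (hn c)

lemma star_to_nf (hC : Confluent R) {s t u : Term F}
    (h1 : StarRW R s t) (h2 : StarRW R s u) (hu : NormalForm R u) :
    StarRW R t u := by
  obtain ⟨v, hv1, hv2⟩ := hC s t u h1 h2
  rwa [star_of_normal hu hv2] at hv1

/-- normalize all arguments -/
lemma normalize_args (hT : Terminating R) (f : F) (ss : List (Term F)) :
    ∃ ns : List (Term F), StarRW R (Term.app f ss) (Term.app f ns) ∧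
      ∀ (i : Nat) n, ns[i]? = some n → NormalForm R n := by
  suffices h : ∀ k : Nat, ∃ ns : List (Term F),
      StarRW R (Term.app f ss) (Term.app f ns) ∧ ns.length = ss.length ∧
      ∀ i n, i < k → ns[i]? = some n → NormalForm R n by
    obtain ⟨ns, h1, h2, h3⟩ := h ss.length
    refine ⟨ns, h1, fun i n hget => h3 i n ?_ hget⟩
    have := (List.getElem?_eq_some_iff.mp hget).1
    omega
  intro k
  induction k with
  | zero => exact ⟨ss, Relation.ReflTransGen.refl, rfl, fun i n h => by omega⟩
  | succ k ih =>
      obtain ⟨ns, h1, h2, h3⟩ := ih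
      by_cases hk : k < ns.length
      · have hu : ns[k]? = some (ns.get ⟨k, hk⟩) := List.getElem?_eq_getElem hk
        set u := ns.get ⟨k, hk⟩ with hudef
        obtain ⟨n, hn1, hn2⟩ := exists_nf hT u
        refine ⟨ns.set k n, h1.trans (star_lift hn1 hu), by simpa using h2, ?_⟩
        intro i m hik hget
        rcases eq_or_ne k i with rfl | hne
        · rw [List.getElem?_set_self hk] at hget
          cases hget
          exact hn2
        · rw [List.getElem?_set_ne hne] at hget
          exact h3 i m (by omega) hget
      · refine ⟨ns, h1, h2, fun i m hik hget => ?_⟩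
        have hil := (List.getElem?_eq_some_iff.mp hget).1
        exact h3 i m (by omega) hget

lemma root_subst {t : Term F} {σ : Nat → Term F} {f : F}
    (hv : ¬ t.IsVar) (h : (t.subst σ).root = some f) : t.root = some f := by
  cases t with
  | var n => exact absurd trivial hv
  | app g ts => simpa [Term.subst, Term.root] using h

end Aux

/-- if a term with root `f` normalizes to a term with root `g ≠ f`,
then `(f, g)` is the root pair of some rule of the LM-system. -/
theorem root_pair_of_normalization {F : Type} (R : TRS F) (hlm : LMSystem R)
    (f g : F) (ss ts : List (Term F)) (hfg : f ≠ g)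
    (h : NFof R (Term.app f ss) (Term.app g ts)) :
    ∃ e ∈ R, e.1.root = some f ∧ e.2.root = some g := by
  obtain ⟨hstar, hnf⟩ := h
  obtain ⟨hC, hT⟩ := hlm.convergent
  -- normalize the arguments
  obtain ⟨ns, hns1, hns2⟩ := normalize_args hT f ss
  -- the normal form of `app f ns` is still `app g ts`
  have hreach : StarRW R (Term.app f ns) (Term.app g ts) :=
    star_to_nf hC hns1 hstar hnf
  -- `app f ns` is not a normal form
  have hnotnf : ¬ NormalForm R (Term.app f ns) := by
    intro hn
    have := star_of_normal hn hreach
    injection this.symm with h1 h2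
    exact hfg h1
  -- every proper subterm of `app f ns` is a normal form
  have heps : EpsIrreducible R (Term.app f ns) := by
    intro p u hsub hp
    cases hsub with
    | here => exact absurd rfl hp
    | there hget hsub' => exact normal_subterm hsub' (hns2 _ _ hget)
  -- forward-closedness gives a single step to the normal form
  have hone : OneStep R (Term.app f ns) (Term.app g ts) :=
    hlm.forwardClosed _ ⟨heps, hnotnf⟩ _ ⟨hreach, hnf⟩
  obtain ⟨ρ, hρ, σ, p, hsub, hrep⟩ := hone
  -- the step must be at the root: otherwise a proper subterm would be reducible
  rcases p with _ | ⟨i, q⟩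
  · -- p = [], so app f ns = ρ.1.subst σ and app g ts = ρ.2.subst σ
      have heq : ρ.1.subst σ = Term.app f ns := subtermAt_nil hsub
      have hval : ρ.2.subst σ = Term.app g ts := (replaceAt_nil hrep).symm
      have hR : ρ ∈ RHSset R := Or.inl hρ
      obtain ⟨hv1, hv2⟩ := hlm.quasiDet.1 ρ hR
      refine ⟨ρ, hρ, ?_, ?_⟩
      · exact root_subst hv1 (by rw [heq]; rfl)
      · exact root_subst hv2 (by rw [hval]; rfl)
  · -- the redex ρ.1.subst σ sits inside a normal argument: contradiction
      exfalso
      cases hsub with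
      | there hget hsub' =>
        have hnu : NormalForm R (ρ.1.subst σ) := normal_subterm hsub' (hns2 _ _ hget)
        exact hnu (ρ.2.subst σ) ⟨ρ, hρ, σ, [], SubtermAt.here _, ReplaceAt.here _ _⟩
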